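/- In the random-translation setting there exists a constant c > 0 such that for all distinct u, v ∈ Σ^∞ and all ρ > 0, P{ω : |Π^ω(u) − Π^ω(v)| ≤ ρ} ≤ c · ρ^d / φ^d(T_{u∧v}). -/

import Mathlib

open Filter MeasureTheory Set
open scoped ENNReal NNReal Topology

noncomputable section

namespace MoranPaper


/-- `ℝ^d` as a Euclidean space. -/
abbrev Rd (d : ℕ) := EuclideanSpace ℝ (Fin d)

/-- The singular values of a `d × d` real matrix, in decreasing order, `0`-indexed:
`sv d T 0 = α₁(T)` is the largest singular value, `sv d T (d-1) = α_d(T)` the smallest.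
(Junk value `0` for indices `≥ d`.) -/
theorem _root_.Matrix.isHermitian_transpose_mul_self {m : Type*} [Fintype m]
    (A : Matrix m m ℝ) : (A.transpose * A).IsHermitian := by
  have h := Matrix.isHermitian_conjTranspose_mul_self A
  simpa [Matrix.conjTranspose_eq_transpose_of_trivial] using h

def sv (d : ℕ) (T : Matrix (Fin d) (Fin d) ℝ) (m : ℕ) : ℝ :=
  if h : m < d then
    (fun j => Real.sqrt ((Matrix.isHermitian_transpose_mul_self T).eigenvalues j))
      (Tuple.sort
        (fun j => Real.sqrt ((Matrix.isHermitian_transpose_mul_self T).eigenvalues j))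
        (Fin.rev ⟨m, h⟩))
  else 0

/-- The singular value function `φ^s(T)`: for `0 < s ≤ d` with `m - 1 < s ≤ m`,
`φ^s(T) = α₁(T)⋯α_{m-1}(T)·α_m(T)^{s-m+1}`; `φ^0(T) = 1`; for `s > d`,
`φ^s(T) = (α₁(T)⋯α_d(T))^{s/d} = |det T|^{s/d}`. -/
def phi (d : ℕ) (T : Matrix (Fin d) (Fin d) ℝ) (s : ℝ) : ℝ :=
  if s ≤ 0 then 1
  else if s ≤ d then
    (∏ i ∈ Finset.range (⌈s⌉₊ - 1), sv d T i) * sv d T (⌈s⌉₊ - 1) ^ (s - ⌈s⌉₊ + 1)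
  else (∏ i ∈ Finset.range d, sv d T i) ^ (s / d)

variable (n : ℕ → ℕ)

/-- Finite words of length `k`: `Σ^k` (`0`-indexed levels: position `i` uses alphabet `Fin (n i)`). -/
abbrev Word (k : ℕ) := ∀ i : Fin k, Fin (n i)

/-- All finite words: `Σ^*`. -/
abbrev FinWord := Σ k : ℕ, Word n k

/-- Infinite words: `Σ^∞`. -/
abbrev InfWord := ∀ k : ℕ, Fin (n k)

/-- Drop the last letter of a word: `u ↦ u⁻`. -/
def wInit {k : ℕ} (u : Word n (k + 1)) : Word n k := fun i => u i.castSucc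

/-- The initial word `u|k` of an infinite word `u`. -/
def wTake (u : InfWord n) (k : ℕ) : Word n k := fun i => u i

/-- The cylinder `C_u ⊆ Σ^∞` of a finite word `u`. -/
def cylinder {k : ℕ} (u : Word n k) : Set (InfWord n) := {v | ∀ i : Fin k, v i = u i}

/-- The length of the maximal common initial word `u ∧ v` of two infinite words. -/
def meetLen (u v : InfWord n) : ℕ := sInf {k : ℕ | u k ≠ v k}

variable {d : ℕ} (T : ∀ k : ℕ, Fin (n k) → Matrix (Fin d) (Fin d) ℝ)

/-- `T_u = T_{1,u_1} T_{2,u_2} ⋯ T_{k,u_k}` for a finite word `u`. -/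
def Tword {k : ℕ} (u : Word n k) : Matrix (Fin d) (Fin d) ℝ :=
  (List.ofFn fun i : Fin k => T i (u i)).prod

/-- The sum `Σ_{u ∈ A} φ^s(T_u)` over a set of finite words, valued in `ℝ≥0∞`. -/
def covSum (s : ℝ) (A : Set (FinWord n)) : ℝ≥0∞ :=
  ∑' u : A, ENNReal.ofReal (phi d (Tword n T u.1.2) s)

/-- The premeasure `M^s_{(k)}(G)`: infimum of `Σ_u φ^s(T_u)` over covers of `G` by cylinders
of words of length at least `k`. -/
def Mk (s : ℝ) (k : ℕ) (G : Set (InfWord n)) : ℝ≥0∞ :=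
  ⨅ (A : Set (FinWord n)) (_ : ∀ u ∈ A, k ≤ u.1)
    (_ : G ⊆ ⋃ u ∈ A, cylinder n u.2), covSum n T s A

/-- The net measure `M^s(G) = lim_{k → ∞} M^s_{(k)}(G)` (the limit of the nondecreasing
sequence `M^s_{(k)}(G)`, i.e. its supremum). -/
def Mnet (s : ℝ) (G : Set (InfWord n)) : ℝ≥0∞ := ⨆ k : ℕ, Mk n T s k G

/-- The critical value `s_A = inf {s : M^s(Σ^∞) = 0}`. -/
def sA : ℝ := sInf {s : ℝ | Mnet n T s univ = 0}

/-- The cut-set `Σ^*(s, ε)`: words `u` (of positive length) with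
`α_m(T_{u⁻}) > ε` and `α_m(T_u) ≤ ε`, where `m - 1 < s ≤ m`. -/
def cutSet (s ε : ℝ) : Set (FinWord n) :=
  {w | ∃ (k : ℕ) (u : Word n (k + 1)), w = ⟨k + 1, u⟩ ∧
    ε < sv d (Tword n T (wInit n u)) (⌈s⌉₊ - 1) ∧ sv d (Tword n T u) (⌈s⌉₊ - 1) ≤ ε}

/-- `Σ_{u ∈ Σ^*(s,ε)} φ^s(T_u)`. -/
def cutSum (s ε : ℝ) : ℝ≥0∞ := covSum n T s (cutSet n T s ε)

/-- The critical value `s^* = inf {s > 0 : limsup_{ε → 0⁺} Σ_{u ∈ Σ^*(s,ε)} φ^s(T_u) < ∞}`. -/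
def sStar : ℝ :=
  sInf {s : ℝ | 0 < s ∧ limsup (fun ε : ℝ => cutSum n T s ε) (𝓝[>] 0) < ⊤}

/-- `N_ε(A)`: the smallest number of sets of diameter at most `ε` needed to cover `A`
(`∞` if there is no such finite cover), valued in `ℝ≥0∞`. -/
def Ncov {X : Type*} [PseudoEMetricSpace X] (A : Set X) (ε : ℝ) : ℝ≥0∞ :=
  ⨅ (C : Finset (Set X)) (_ : A ⊆ ⋃ c ∈ C, c)
    (_ : ∀ c ∈ C, EMetric.diam c ≤ ENNReal.ofReal ε), (C.card : ℝ≥0∞)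

/-- The upper box-counting dimension: `limsup_{ε → 0⁺} log N_ε(A) / (- log ε)`. -/
def ubDim {X : Type*} [PseudoEMetricSpace X] (A : Set X) : ℝ :=
  limsup (fun ε : ℝ => Real.log (Ncov A ε).toReal / (-Real.log ε)) (𝓝[>] 0)

/-- The lower box-counting dimension: `liminf_{ε → 0⁺} log N_ε(A) / (- log ε)`. -/
def lbDim {X : Type*} [PseudoEMetricSpace X] (A : Set X) : ℝ :=
  liminf (fun ε : ℝ => Real.log (Ncov A ε).toReal / (-Real.log ε)) (𝓝[>] 0)

section Moran

variable (ω : ∀ k : ℕ, Word n (k + 1) → Rd d)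

/-- The affine map `x ↦ T_{k, u_k} x + ω_u` determined by the last letter of `u` and the
translation attached to `u`. -/
def stepMap (k : ℕ) (u : Word n (k + 1)) : Rd d → Rd d :=
  fun x => Matrix.toEuclideanLin (T k (u (Fin.last k))) x + ω k u

/-- The composition `Ψ_u = Ψ_{u_1} ∘ ⋯ ∘ Ψ_{u_k}`, where `Ψ_{u_j}(x) = T_{j,u_j} x + ω_{u|j}`. -/
def PsiW : ∀ k : ℕ, Word n k → Rd d → Rd d
  | 0, _ => id
  | (k + 1), u => PsiW k (wInit n u) ∘ stepMap n T ω k u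

/-- The basic set `J_u = Ψ_u(J)`. -/
def Ju (J : Set (Rd d)) (k : ℕ) (u : Word n k) : Set (Rd d) := PsiW n T ω k u '' J

/-- The self-affine Moran set `E = ⋂_{k ≥ 1} ⋃_{u ∈ Σ^k} J_u`. -/
def Eset (J : Set (Rd d)) : Set (Rd d) :=
  ⋂ k : ℕ, ⋃ u : Word n (k + 1), Ju n T ω J (k + 1) u

/-- The Moran structure conditions: `J` is compact with nonempty interior, each `J_{ui}` is a
subset of `J_u`, and the maximal diameter of level-`k` basic sets tends to `0`. -/
def IsMoran (J : Set (Rd d)) : Prop :=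
  IsCompact J ∧ (interior J).Nonempty ∧
    (∀ (k : ℕ) (u : Word n (k + 1)), Ju n T ω J (k + 1) u ⊆ Ju n T ω J k (wInit n u)) ∧
    Tendsto (fun k : ℕ => ⨆ u : Word n k, EMetric.diam (Ju n T ω J k u)) atTop (𝓝 0)

/-- The standing assumptions on the matrices: each `T_{k,j}` is nonsingular, and
`0 < α₋ ≤ α₊ < 1` where `α₋ = inf α_d(T_{k,j})` and `α₊ = sup α₁(T_{k,j})`. -/
def GoodMatrices : Prop :=
  (∀ (k : ℕ) (j : Fin (n k)), (T k j).det ≠ 0) ∧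
    ∃ am ap : ℝ, 0 < am ∧ ap < 1 ∧
      ∀ (k : ℕ) (j : Fin (n k)), am ≤ sv d (T k j) (d - 1) ∧ sv d (T k j) 0 ≤ ap

end Moran


section Random

variable {Ω : Type*} [MeasurableSpace Ω] (Pr : Measure Ω)
variable (W : (Σ k : ℕ, Word n (k + 1)) → Ω → Rd d)

/-- The random projection `Π^ω(u) = Σ_{k ≥ 0} T_{u|k} ω_{u|(k+1)}`, where
`ω = {ω_w : w ∈ Σ^*}` is the family of random translation vectors,
realized as random variables `W w` on a probability space `Ω`. -/
def PiRandom (θ : Ω) (u : InfWord n) : Rd d :=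
  ∑' k : ℕ, Matrix.toEuclideanLin (Tword n T (wTake n u k)) (W ⟨k, wTake n u (k + 1)⟩ θ)

/-- The self-affine Moran set with random translations, `E^ω = Π^ω(Σ^∞)`. -/
def EsetRandom (θ : Ω) : Set (Rd d) := range (PiRandom n T W θ)

/-- The random-translation setting: `Pr` is a probability law on `Ω`; the translations
`ω_w = W w`, `w ∈ Σ^*`, are independent identically distributed random vectors taking values
in a bounded region `D ⊆ ℝ^d`, whose common distribution `P` is absolutely continuous with
respect to `d`-dimensional Lebesgue measure, with bounded density. -/
def RandomTranslations (D : Set (Rd d)) (P : Measure (Rd d)) : Prop :=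
  IsProbabilityMeasure Pr ∧ Bornology.IsBounded D ∧ D.Nonempty ∧
    IsProbabilityMeasure P ∧ P Dᶜ = 0 ∧
    (∃ C : ℝ≥0, ∃ f : Rd d → ℝ≥0∞, (∀ x, f x ≤ C) ∧ P = volume.withDensity f) ∧
    (∀ w, Measurable (W w)) ∧
    ProbabilityTheory.iIndepFun W Pr ∧
    (∀ w, Measure.map (W w) Pr = P)

end Random


section AuxSpectral
open Matrix

lemma sv_nonneg' (d : ℕ) (M : Matrix (Fin d) (Fin d) ℝ) (m : ℕ) : 0 ≤ sv d M m := by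
  unfold sv
  split
  · exact Real.sqrt_nonneg _
  · exact le_refl _

lemma eigen_le_sq_sv_zero {d : ℕ} (hd : 0 < d) (M : Matrix (Fin d) (Fin d) ℝ) (i : Fin d) :
    (Matrix.isHermitian_transpose_mul_self M).eigenvalues i ≤ sv d M 0 ^ 2 := by
  set f : Fin d → ℝ :=
    fun j => Real.sqrt ((Matrix.isHermitian_transpose_mul_self M).eigenvalues j) with hf
  have h0 : sv d M 0 = f (Tuple.sort f (Fin.rev ⟨0, hd⟩)) := by
    rw [sv, dif_pos hd]
  have hmono := Tuple.monotone_sort f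
  have hle : ∀ j : Fin d, f j ≤ f (Tuple.sort f (Fin.rev ⟨0, hd⟩)) := by
    intro j
    have : f j = (f ∘ Tuple.sort f) ((Tuple.sort f).symm j) := by simp
    rw [this]
    apply hmono
    show ((Tuple.sort f).symm j : Fin d) ≤ Fin.rev ⟨0, hd⟩
    rw [Fin.le_def]
    have : (Fin.rev (⟨0, hd⟩ : Fin d)).val = d - 1 := by simp [Fin.rev]
    rw [this]
    exact Nat.le_pred_of_lt ((Tuple.sort f).symm j).isLt
  have hnn := Matrix.eigenvalues_conjTranspose_mul_self_nonneg M i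
  calc (Matrix.isHermitian_transpose_mul_self M).eigenvalues i = f i ^ 2 := by
        rw [hf]; exact (Real.sq_sqrt hnn).symm
    _ ≤ (f (Tuple.sort f (Fin.rev ⟨0, hd⟩))) ^ 2 := by
        apply pow_le_pow_left₀ (Real.sqrt_nonneg _) (hle i)
    _ = sv d M 0 ^ 2 := by rw [h0]

lemma aux_dot (d : ℕ) (M : Matrix (Fin d) (Fin d) ℝ) (x y : Fin d → ℝ) :
    x ⬝ᵥ ((Mᴴ * M) *ᵥ y) = (M *ᵥ x) ⬝ᵥ (M *ᵥ y) := by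
  rw [← Matrix.mulVec_mulVec, Matrix.dotProduct_mulVec]
  simp [Matrix.vecMul_transpose]

lemma norm_sq_toEuclidean (d : ℕ) (M : Matrix (Fin d) (Fin d) ℝ) (x : EuclideanSpace ℝ (Fin d)) :
    ‖Matrix.toEuclideanLin M x‖ ^ 2 = inner ℝ x (Matrix.toEuclideanLin (Mᴴ * M) x) := by
  rw [← real_inner_self_eq_norm_sq]
  simp only [Matrix.toEuclideanLin_apply, PiLp.inner_apply, RCLike.inner_apply, conj_trivial]
  exact (aux_dot d M _ _).symm.trans (dotProduct_comm _ _)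

lemma inner_basis_mul (d : ℕ) (M : Matrix (Fin d) (Fin d) ℝ) (x : EuclideanSpace ℝ (Fin d))
    (i : Fin d) :
    (inner ℝ ((Matrix.isHermitian_transpose_mul_self M).eigenvectorBasis i)
      (Matrix.toEuclideanLin (Mᴴ * M) x) : ℝ) =
    (Matrix.isHermitian_transpose_mul_self M).eigenvalues i *
      inner ℝ ((Matrix.isHermitian_transpose_mul_self M).eigenvectorBasis i) x := by
  set hH := Matrix.isHermitian_transpose_mul_self M
  set b := hH.eigenvectorBasis
  simp only [Matrix.toEuclideanLin_apply, PiLp.inner_apply, RCLike.inner_apply, conj_trivial]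
  have key : ∀ v w : Fin d → ℝ, ((Mᴴ * M) *ᵥ v = hH.eigenvalues i • v) →
      v ⬝ᵥ ((Mᴴ * M) *ᵥ w) = hH.eigenvalues i * (v ⬝ᵥ w) := by
    intro v w hv
    rw [Matrix.dotProduct_mulVec]
    have hsym : v ᵥ* (Mᴴ * M) = (Mᴴ * M) *ᵥ v := by
      rw [Matrix.conjTranspose_eq_transpose_of_trivial]
      nth_rewrite 1 [← hH.eq]
      rw [Matrix.vecMul_conjTranspose]
      simp
    rw [hsym, hv, smul_dotProduct]; rfl
  have := key _ x.ofLp (hH.mulVec_eigenvectorBasis i)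
  rw [dotProduct_comm, dotProduct_comm _ x.ofLp] at this
  exact this

lemma norm_toEuclideanLin_le {d : ℕ} (hd : 0 < d) (M : Matrix (Fin d) (Fin d) ℝ)
    (x : EuclideanSpace ℝ (Fin d)) :
    ‖Matrix.toEuclideanLin M x‖ ≤ sv d M 0 * ‖x‖ := by
  set hH := Matrix.isHermitian_transpose_mul_self M
  set b := hH.eigenvectorBasis
  have hsq : ‖Matrix.toEuclideanLin M x‖ ^ 2 ≤ (sv d M 0 * ‖x‖) ^ 2 := by
    rw [norm_sq_toEuclidean]
    have hpars := b.sum_inner_mul_inner x (Matrix.toEuclideanLin (Mᴴ * M) x)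
    rw [← hpars]
    have hx : (‖x‖ : ℝ) ^ 2 = ∑ i, (inner ℝ (b i) x : ℝ) ^ 2 := by
      rw [← real_inner_self_eq_norm_sq, ← b.sum_inner_mul_inner x x]
      congr 1; funext i
      rw [real_inner_comm x (b i)]; ring
    rw [mul_pow, hx, Finset.mul_sum]
    apply Finset.sum_le_sum
    intro i _
    rw [inner_basis_mul]
    have hc : (inner ℝ x (b i) : ℝ) = inner ℝ (b i) x := real_inner_comm _ _
    rw [hc]
    have h1 : (inner ℝ (b i) x : ℝ) * (hH.eigenvalues i * inner ℝ (b i) x) =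
        hH.eigenvalues i * (inner ℝ (b i) x : ℝ) ^ 2 := by ring
    rw [h1]
    exact mul_le_mul_of_nonneg_right (eigen_le_sq_sv_zero hd M i) (sq_nonneg _)
  have h2 : 0 ≤ sv d M 0 * ‖x‖ := mul_nonneg (sv_nonneg' d M 0) (norm_nonneg x)
  calc ‖Matrix.toEuclideanLin M x‖ = Real.sqrt (‖Matrix.toEuclideanLin M x‖ ^ 2) :=
        (Real.sqrt_sq (norm_nonneg _)).symm
    _ ≤ Real.sqrt ((sv d M 0 * ‖x‖) ^ 2) := Real.sqrt_le_sqrt hsq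
    _ = sv d M 0 * ‖x‖ := Real.sqrt_sq h2

lemma sqrt_prod' {ι : Type*} (s : Finset ι) (f : ι → ℝ) (h : ∀ i ∈ s, 0 ≤ f i) :
    ∏ i ∈ s, Real.sqrt (f i) = Real.sqrt (∏ i ∈ s, f i) := by
  classical
  induction s using Finset.induction_on with
  | empty => simp
  | insert a s' hni ih =>
    rw [Finset.prod_insert hni, Finset.prod_insert hni,
      ih (fun i hi => h i (Finset.mem_insert_of_mem hi)),
      Real.sqrt_mul (h a (Finset.mem_insert_self a s'))]

lemma prod_sv_eq_abs_det {d : ℕ} (M : Matrix (Fin d) (Fin d) ℝ) :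
    ∏ i ∈ Finset.range d, sv d M i = |M.det| := by
  set hH := Matrix.isHermitian_transpose_mul_self M
  set f : Fin d → ℝ := fun j => Real.sqrt (hH.eigenvalues j) with hf
  have h1 : ∏ i ∈ Finset.range d, sv d M i = ∏ i : Fin d, sv d M i := by
    rw [Fin.prod_univ_eq_prod_range]
  have h2 : ∀ i : Fin d, sv d M i.val = f (Tuple.sort f (Fin.rev i)) := by
    intro i
    rw [sv, dif_pos i.isLt]
  have h3 : ∏ i : Fin d, sv d M i.val = ∏ i : Fin d, f i := by
    rw [Finset.prod_congr rfl (fun i _ => h2 i)]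
    exact Equiv.prod_comp (Fin.revPerm.trans (Tuple.sort f)) f
  rw [h1, h3, hf]
  beta_reduce
  rw [sqrt_prod' _ (fun i => hH.eigenvalues i) (fun i _ => (Matrix.eigenvalues_conjTranspose_mul_self_nonneg M i :
    0 ≤ hH.eigenvalues i))]
  have h4 : ∏ i : Fin d, hH.eigenvalues i = (Mᴴ * M).det := by
    have := hH.det_eq_prod_eigenvalues
    simpa using this.symm
  rw [h4]
  have h5 : (Mᴴ * M).det = M.det ^ 2 := by
    rw [Matrix.det_mul]
    simp [Matrix.det_conjTranspose, sq]
  rw [h5, Real.sqrt_sq_eq_abs]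

lemma phi_d_eq_abs_det {d : ℕ} (hd : 1 ≤ d) (M : Matrix (Fin d) (Fin d) ℝ) :
    phi d M d = |M.det| := by
  rw [phi]
  have h0 : ¬ ((d : ℝ) ≤ 0) := by
    push_neg; exact_mod_cast hd
  rw [if_neg h0, if_pos le_rfl]
  have hceil : ⌈(d : ℝ)⌉₊ = d := Nat.ceil_natCast d
  rw [hceil]
  have hexp : (d : ℝ) - d + 1 = 1 := by ring
  rw [hexp, Real.rpow_one]
  rw [← prod_sv_eq_abs_det M]
  have h6 := Finset.prod_range_succ (fun i => sv d M i) (d - 1)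
  rw [Nat.sub_add_cancel hd] at h6
  exact h6.symm

lemma Tword_wTake_succ {d : ℕ} (nn : ℕ → ℕ) (TT : ∀ k : ℕ, Fin (nn k) → Matrix (Fin d) (Fin d) ℝ)
    (u : InfWord nn) (j : ℕ) :
    Tword nn TT (wTake nn u (j + 1)) = Tword nn TT (wTake nn u j) * TT j (u j) := by
  unfold Tword
  rw [List.ofFn_succ']
  rw [List.concat_eq_append, List.prod_append]
  simp [wTake]

lemma toEuclideanLin_one' {d : ℕ} (x : EuclideanSpace ℝ (Fin d)) :
    Matrix.toEuclideanLin (1 : Matrix (Fin d) (Fin d) ℝ) x = x := by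
  simp [Matrix.toEuclideanLin_apply, Matrix.one_mulVec]

lemma toEuclideanLin_mul' {d : ℕ} (A B : Matrix (Fin d) (Fin d) ℝ)
    (x : EuclideanSpace ℝ (Fin d)) :
    Matrix.toEuclideanLin (A * B) x = Matrix.toEuclideanLin A (Matrix.toEuclideanLin B x) := by
  simp [Matrix.toEuclideanLin_apply, Matrix.mulVec_mulVec]

lemma Tword_wTake_zero {d : ℕ} (nn : ℕ → ℕ)
    (TT : ∀ k : ℕ, Fin (nn k) → Matrix (Fin d) (Fin d) ℝ) (u : InfWord nn) :
    Tword nn TT (wTake nn u 0) = 1 := by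
  unfold Tword
  simp

lemma det_Tword_ne_zero {d : ℕ} (nn : ℕ → ℕ)
    (TT : ∀ k : ℕ, Fin (nn k) → Matrix (Fin d) (Fin d) ℝ)
    (hdet : ∀ (k : ℕ) (j : Fin (nn k)), (TT k j).det ≠ 0) (u : InfWord nn) (j : ℕ) :
    (Tword nn TT (wTake nn u j)).det ≠ 0 := by
  induction j with
  | zero => rw [Tword_wTake_zero]; simp
  | succ j ih =>
    rw [Tword_wTake_succ, Matrix.det_mul]
    exact mul_ne_zero ih (hdet j (u j))

lemma norm_Tword_le {d : ℕ} (hd : 0 < d) (nn : ℕ → ℕ)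
    (TT : ∀ k : ℕ, Fin (nn k) → Matrix (Fin d) (Fin d) ℝ) (ap : ℝ) (hap0 : 0 ≤ ap)
    (hsv : ∀ (k : ℕ) (j : Fin (nn k)), sv d (TT k j) 0 ≤ ap) (u : InfWord nn) (j : ℕ)
    (x : EuclideanSpace ℝ (Fin d)) :
    ‖Matrix.toEuclideanLin (Tword nn TT (wTake nn u j)) x‖ ≤ ap ^ j * ‖x‖ := by
  induction j generalizing x with
  | zero => rw [Tword_wTake_zero]; rw [toEuclideanLin_one']; simp
  | succ j ih =>
    rw [Tword_wTake_succ, toEuclideanLin_mul']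
    calc ‖Matrix.toEuclideanLin (Tword nn TT (wTake nn u j))
          (Matrix.toEuclideanLin (TT j (u j)) x)‖
        ≤ ap ^ j * ‖Matrix.toEuclideanLin (TT j (u j)) x‖ := ih _
      _ ≤ ap ^ j * (ap * ‖x‖) := by
          apply mul_le_mul_of_nonneg_left _ (pow_nonneg hap0 j)
          calc ‖Matrix.toEuclideanLin (TT j (u j)) x‖ ≤ sv d (TT j (u j)) 0 * ‖x‖ :=
                norm_toEuclideanLin_le hd _ x
            _ ≤ ap * ‖x‖ := mul_le_mul_of_nonneg_right (hsv j (u j)) (norm_nonneg x)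
      _ = ap ^ (j + 1) * ‖x‖ := by ring


set_option maxHeartbeats 1000000 in
lemma det_toEuclideanLin' (d : ℕ) (M : Matrix (Fin d) (Fin d) ℝ) :
    LinearMap.det
      (Matrix.toEuclideanLin M : EuclideanSpace ℝ (Fin d) →ₗ[ℝ] EuclideanSpace ℝ (Fin d)) =
      M.det :=
  LinearMap.det_toLin (PiLp.basisFun 2 ℝ (Fin d)) M

lemma F_meas_indep {Ω ι : Type*} [mΩ : MeasurableSpace Ω] (Pr : Measure Ω)
    [IsProbabilityMeasure Pr] {d : ℕ} (W : ι → Ω → Rd d)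
    (hWmeas : ∀ i, Measurable[mΩ] (W i))
    (hWindep : ProbabilityTheory.iIndepFun W Pr) (i0 : ι)
    (m' : MeasurableSpace Ω)
    (hm'eq : m' = ⨆ w ∈ ({i0}ᶜ : Set ι), MeasurableSpace.comap (W w) inferInstance)
    (g : ℕ → Ω → Rd d) (hgm : ∀ j, Measurable[m'] (g j))
    (hsum : ∀ θ, Summable fun j => g j θ) :
    Measurable[mΩ] (fun θ => ∑' j, g j θ) ∧
      ProbabilityTheory.IndepFun (fun θ => ∑' j, g j θ) (W i0) Pr := by
  have hm'le : m' ≤ mΩ := by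
    rw [hm'eq]
    exact iSup₂_le fun w _ => measurable_iff_comap_le.1 (hWmeas w)
  have hFm' : Measurable[m'] (fun θ => ∑' j, g j θ) := by
    apply measurable_of_tendsto_metrizable' (f := fun N θ => ∑ j ∈ Finset.range N, g j θ) atTop
    · intro N
      exact Finset.measurable_sum _ fun j _ => hgm j
    · rw [tendsto_pi_nhds]
      intro θ
      exact (hsum θ).hasSum.tendsto_sum_nat
  refine ⟨hFm'.mono hm'le le_rfl, ?_⟩
  have h1 := ProbabilityTheory.indep_biSup_compl
    (fun w => measurable_iff_comap_le.1 (hWmeas w))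
    ((ProbabilityTheory.iIndepFun_iff_iIndep _ _ _).1 hWindep) {i0}
  have h2 : (⨆ w ∈ ({i0} : Set ι), MeasurableSpace.comap (W w) inferInstance) =
      MeasurableSpace.comap (W i0) inferInstance := by simp
  rw [h2, ← hm'eq] at h1
  rw [ProbabilityTheory.IndepFun_iff_Indep]
  exact (ProbabilityTheory.indep_of_indep_of_le_right h1
    (measurable_iff_comap_le.1 hFm')).symm

end AuxSpectral

set_option maxHeartbeats 2000000

/-- **Lemma (distance probability estimate in the random-translation setting).**
There is a constant `c > 0` such that for all distinct `u, v ∈ Σ^∞` and all `ρ > 0`,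
`P{ω : |Π^ω(u) − Π^ω(v)| ≤ ρ} ≤ c · ρ^d / φ^d(T_{u∧v})`. -/
theorem prob_dist_le (d : ℕ) (hd : 1 ≤ d) (n : ℕ → ℕ) (hn : ∀ k, 2 ≤ n k)
    (T : ∀ k : ℕ, Fin (n k) → Matrix (Fin d) (Fin d) ℝ) (hT : GoodMatrices n T)
    {Ω : Type*} [MeasurableSpace Ω] (Pr : Measure Ω)
    (W : (Σ k : ℕ, Word n (k + 1)) → Ω → Rd d)
    (D : Set (Rd d)) (P : Measure (Rd d))
    (hRT : RandomTranslations n Pr W D P) :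
    ∃ c : ℝ, 0 < c ∧ ∀ u v : InfWord n, u ≠ v → ∀ ρ : ℝ, 0 < ρ →
      Pr {θ | ‖PiRandom n T W θ u - PiRandom n T W θ v‖ ≤ ρ} ≤
        ENNReal.ofReal
          (c * ρ ^ d / phi d (Tword n T (wTake n u (meetLen n u v))) d) := by
  classical
  obtain ⟨hPrProb, hDbdd, hDne, hPprob, hPD, ⟨C, f, hfC, hPf⟩, hWmeas, hWindep, hWmap⟩ := hRT
  haveI := hPrProb
  haveI := hPprob
  obtain ⟨hdet, am, ap, ham, hap1, hbounds⟩ := hT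
  have hd0 : 0 < d := hd
  have hap0 : 0 ≤ ap := by
    have h2 : (0 : ℕ) < n 0 := lt_of_lt_of_le (by norm_num) (hn 0)
    exact le_trans (sv_nonneg' d (T 0 ⟨0, h2⟩) 0) (hbounds 0 ⟨0, h2⟩).2
  obtain ⟨R₀, hR₀⟩ := hDbdd.subset_closedBall 0
  set R : ℝ := max R₀ 0 with hR
  have hR0 : 0 ≤ R := le_max_right _ _
  have hDR : D ⊆ Metric.closedBall 0 R :=
    hR₀.trans (Metric.closedBall_subset_closedBall (le_max_left _ _))
  set κ : ℝ≥0∞ := volume (Metric.ball (0 : Rd d) 1) with hκ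
  have hκne : κ ≠ ⊤ := measure_ball_lt_top.ne
  refine ⟨((C : ℝ) + 1) * (κ.toReal + 1), by positivity, ?_⟩
  intro u v huv ρ hρ
  set k := meetLen n u v with hk
  have hne : {m : ℕ | u m ≠ v m}.Nonempty := by
    by_contra h
    exact huv (funext fun m => not_not.1 fun hm => h ⟨m, hm⟩)
  have hkmem : u k ≠ v k := Nat.sInf_mem hne
  have hagree : ∀ i, i < k → u i = v i := by
    intro i hi
    by_contra h
    exact Nat.notMem_of_lt_sInf hi h
  set M₀ := Tword n T (wTake n u k) with hM₀
  have hM₀det : M₀.det ≠ 0 := det_Tword_ne_zero n T hdet u k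
  have hΔpos : (0 : ℝ) < |M₀.det| := abs_pos.2 hM₀det
  set w0 : (Σ m : ℕ, Word n (m + 1)) := ⟨k, wTake n u (k + 1)⟩ with hw0
  set Y : Ω → Rd d := W w0 with hY
  -- truncation
  set tr : Rd d → Rd d := fun x => if ‖x‖ ≤ R then x else 0 with htr
  have htrm : Measurable tr :=
    Measurable.ite (measurableSet_le measurable_norm measurable_const) measurable_id
      measurable_const
  have htrR : ∀ x, ‖tr x‖ ≤ R := by
    intro x
    rw [htr]
    by_cases hx : ‖x‖ ≤ R
    · simpa [hx] using hx
    · simp [hx, hR0]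
  have htrD : ∀ x ∈ D, tr x = x := by
    intro x hx
    have := mem_closedBall_zero_iff.1 (hDR hx)
    simp [htr, this]
  -- the summands
  set g : ℕ → Ω → Rd d := fun j θ =>
    (if j = k then 0 else
      Matrix.toEuclideanLin (Tword n T (wTake n u j)) (tr (W ⟨j, wTake n u (j + 1)⟩ θ)))
    - Matrix.toEuclideanLin (Tword n T (wTake n v j)) (tr (W ⟨j, wTake n v (j + 1)⟩ θ)) with hg
  have hg_bound : ∀ j θ, ‖g j θ‖ ≤ (2 * R) * ap ^ j := by
    intro j θ
    rw [hg]
    have h2 : ∀ (w : InfWord n) (x : Rd d),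
        ‖Matrix.toEuclideanLin (Tword n T (wTake n w j)) (tr x)‖ ≤ R * ap ^ j := by
      intro w x
      calc ‖Matrix.toEuclideanLin (Tword n T (wTake n w j)) (tr x)‖
          ≤ ap ^ j * ‖tr x‖ := norm_Tword_le hd0 n T ap hap0 (fun a b => (hbounds a b).2) w j _
        _ ≤ ap ^ j * R := mul_le_mul_of_nonneg_left (htrR x) (pow_nonneg hap0 j)
        _ = R * ap ^ j := mul_comm _ _
    calc ‖(if j = k then 0 else
          Matrix.toEuclideanLin (Tword n T (wTake n u j)) (tr (W ⟨j, wTake n u (j + 1)⟩ θ)))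
        - Matrix.toEuclideanLin (Tword n T (wTake n v j)) (tr (W ⟨j, wTake n v (j + 1)⟩ θ))‖
        ≤ ‖(if j = k then 0 else
            Matrix.toEuclideanLin (Tword n T (wTake n u j)) (tr (W ⟨j, wTake n u (j + 1)⟩ θ)))‖
          + ‖Matrix.toEuclideanLin (Tword n T (wTake n v j))
              (tr (W ⟨j, wTake n v (j + 1)⟩ θ))‖ := norm_sub_le _ _
      _ ≤ R * ap ^ j + R * ap ^ j := by
          apply add_le_add _ (h2 v _)
          by_cases hj : j = k
          · rw [if_pos hj, norm_zero]
            exact mul_nonneg hR0 (pow_nonneg hap0 j)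
          · rw [if_neg hj]
            exact h2 u _
      _ = (2 * R) * ap ^ j := by ring
  have hgeom : Summable (fun j : ℕ => (2 * R) * ap ^ j) :=
    (summable_geometric_of_lt_one hap0 hap1).mul_left _
  have hgsum : ∀ θ, Summable (fun j => g j θ) := fun θ =>
    Summable.of_norm_bounded hgeom (fun j => hg_bound j θ)
  set F : Ω → Rd d := fun θ => ∑' j, g j θ with hF
  have hlinmeas : ∀ B : Matrix (Fin d) (Fin d) ℝ,
      Measurable (fun x : Rd d => Matrix.toEuclideanLin B x) := fun B =>
    (LinearMap.continuous_of_finiteDimensional _).measurable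
  have hvne : (⟨k, wTake n v (k + 1)⟩ : Σ m : ℕ, Word n (m + 1)) ≠ w0 := by
    intro h
    rw [hw0] at h
    have h2 := (Sigma.mk.inj_iff.1 h).2
    have h3 : wTake n v (k + 1) = wTake n u (k + 1) := eq_of_heq h2
    have h4 := congrFun h3 ⟨k, Nat.lt_succ_self k⟩
    exact hkmem (by exact h4.symm)
  have hjne : ∀ j, j ≠ k → ∀ (w : Word n (j + 1)),
      (⟨j, w⟩ : Σ m : ℕ, Word n (m + 1)) ≠ w0 := by
    intro j hj w h
    exact hj (by rw [hw0] at h; exact congrArg Sigma.fst h)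
  have hgm' : ∀ j, Measurable[⨆ w ∈ ({w0}ᶜ : Set (Σ m : ℕ, Word n (m + 1))),
      MeasurableSpace.comap (W w) inferInstance] (g j) := by
    intro j
    have hWm' : ∀ w, w ≠ w0 → Measurable[⨆ w ∈ ({w0}ᶜ : Set (Σ m : ℕ, Word n (m + 1))),
        MeasurableSpace.comap (W w) inferInstance] (W w) := by
      intro w hw
      apply measurable_iff_comap_le.2
      exact le_iSup₂ (f := fun (w : Σ m : ℕ, Word n (m + 1)) (_ : w ∈ ({w0}ᶜ : Set _)) =>
        MeasurableSpace.comap (W w) inferInstance) w hw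
    have hport : ∀ (w : Σ m : ℕ, Word n (m + 1)), w ≠ w0 → ∀ B : Matrix (Fin d) (Fin d) ℝ,
        Measurable[⨆ w ∈ ({w0}ᶜ : Set (Σ m : ℕ, Word n (m + 1))),
          MeasurableSpace.comap (W w) inferInstance]
          (fun θ => Matrix.toEuclideanLin B (tr (W w θ))) := by
      intro w hw B
      exact (hlinmeas B).comp (htrm.comp (hWm' w hw))
    rw [hg]
    by_cases hj : j = k
    · subst hj
      simp only [if_pos rfl]
      exact Measurable.sub measurable_const (hport _ hvne _)
    · simp only [if_neg hj]
      exact (hport _ (hjne j hj _) _).sub (hport _ (hjne j hj _) _)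
  obtain ⟨hFmeas, hIndep⟩ := F_meas_indep Pr W hWmeas hWindep w0
    (⨆ w ∈ ({w0}ᶜ : Set (Σ m : ℕ, Word n (m + 1))), MeasurableSpace.comap (W w) inferInstance)
    rfl g hgm' hgsum
  rw [← hF] at hFmeas hIndep
  have hYmeas : Measurable Y := hWmeas w0
  -- the target set
  set S : Set (Rd d × Rd d) := {p | ‖p.1 + Matrix.toEuclideanLin M₀ p.2‖ ≤ ρ} with hS_def
  have hA_cont : Continuous fun x : Rd d => Matrix.toEuclideanLin M₀ x :=
    LinearMap.continuous_of_finiteDimensional _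
  have hS : MeasurableSet S := by
    apply measurableSet_le _ measurable_const
    exact (continuous_fst.add (hA_cont.comp continuous_snd)).norm.measurable
  -- the good set
  set Ω0 : Set Ω := {θ | ∀ w, W w θ ∈ D} with hΩ0
  have hΩ0c : Pr Ω0ᶜ = 0 := by
    have hcup : Ω0ᶜ = ⋃ w, (W w) ⁻¹' Dᶜ := by
      ext θ
      simp [hΩ0]
    rw [hcup]
    refine measure_iUnion_null fun w => le_antisymm ?_ zero_le
    calc Pr (W w ⁻¹' Dᶜ) ≤ (Pr.map (W w)) Dᶜ :=
          Measure.le_map_apply (hWmeas w).aemeasurable _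
      _ = P Dᶜ := by rw [hWmap w]
      _ = 0 := hPD
  -- the decomposition on the good set
  have hdecomp : ∀ θ ∈ Ω0, PiRandom n T W θ u - PiRandom n T W θ v =
      F θ + Matrix.toEuclideanLin M₀ (Y θ) := by
    intro θ hθ
    have hWD : ∀ w, ‖W w θ‖ ≤ R := fun w => mem_closedBall_zero_iff.1 (hDR (hθ w))
    set a : ℕ → Rd d := fun j =>
      Matrix.toEuclideanLin (Tword n T (wTake n u j)) (W ⟨j, wTake n u (j + 1)⟩ θ) with ha_def
    set b : ℕ → Rd d := fun j =>
      Matrix.toEuclideanLin (Tword n T (wTake n v j)) (W ⟨j, wTake n v (j + 1)⟩ θ) with hb_def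
    have habound : ∀ (w : InfWord n) (j : ℕ),
        ‖Matrix.toEuclideanLin (Tword n T (wTake n w j)) (W ⟨j, wTake n w (j + 1)⟩ θ)‖ ≤
          R * ap ^ j := by
      intro w j
      calc ‖Matrix.toEuclideanLin (Tword n T (wTake n w j)) (W ⟨j, wTake n w (j + 1)⟩ θ)‖
          ≤ ap ^ j * ‖W ⟨j, wTake n w (j + 1)⟩ θ‖ :=
            norm_Tword_le hd0 n T ap hap0 (fun a' b' => (hbounds a' b').2) w j _
        _ ≤ ap ^ j * R := mul_le_mul_of_nonneg_left (hWD _) (pow_nonneg hap0 j)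
        _ = R * ap ^ j := mul_comm _ _
    have hgeom' : Summable (fun j : ℕ => R * ap ^ j) :=
      (summable_geometric_of_lt_one hap0 hap1).mul_left _
    have hsa : Summable a := Summable.of_norm_bounded hgeom' (fun j => habound u j)
    have hsb : Summable b := Summable.of_norm_bounded hgeom' (fun j => habound v j)
    have h1 : PiRandom n T W θ u - PiRandom n T W θ v = ∑' j, (a j - b j) := by
      rw [Summable.tsum_sub hsa hsb]
      rfl
    set δ : ℕ → Rd d := fun j =>
      if j = k then Matrix.toEuclideanLin M₀ (Y θ) else 0 with hδ_def
    have hδsum : Summable δ := by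
      apply summable_of_ne_finset_zero (s := {k})
      intro j hj
      rw [hδ_def]
      simp only [Finset.mem_singleton] at hj
      simp [hj]
    have htr_eq : ∀ w, tr (W w θ) = W w θ := fun w => htrD _ (hθ w)
    have hab : ∀ j, a j - b j = g j θ + δ j := by
      intro j
      by_cases hj : j = k
      · subst hj
        simp only [ha_def, hb_def, hg, hδ_def, htr_eq, if_pos rfl, hY, hw0, hM₀]
        abel
      · simp only [ha_def, hb_def, hg, hδ_def, htr_eq, if_neg hj]
        abel
    rw [h1]
    rw [tsum_congr hab, Summable.tsum_add (by
      apply Summable.congr (hgsum θ)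
      intro j
      rfl) hδsum]
    rw [hF]
    congr 1
    rw [hδ_def]
    exact tsum_ite_eq k _
  -- putting it together
  have hsub : {θ | ‖PiRandom n T W θ u - PiRandom n T W θ v‖ ≤ ρ} ⊆
      {θ | ‖F θ + Matrix.toEuclideanLin M₀ (Y θ)‖ ≤ ρ} ∪ Ω0ᶜ := by
    intro θ hθ
    by_cases hθ0 : θ ∈ Ω0
    · left
      show ‖F θ + Matrix.toEuclideanLin M₀ (Y θ)‖ ≤ ρ
      rw [← hdecomp θ hθ0]
      exact hθ
    · right
      exact hθ0
  haveI : IsProbabilityMeasure (Pr.map F) := Measure.isProbabilityMeasure_map hFmeas.aemeasurable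
  have hslice : ∀ y : Rd d, P (Prod.mk y ⁻¹' S) ≤
      (C : ℝ≥0∞) * (ENNReal.ofReal |(M₀.det)⁻¹| * (ENNReal.ofReal (ρ ^ d) * κ)) := by
    intro y
    have hpre : Prod.mk y ⁻¹' S =
        (fun x : Rd d => Matrix.toEuclideanLin M₀ x) ⁻¹' Metric.closedBall (-y) ρ := by
      ext x
      simp only [hS_def, Set.mem_preimage, Set.mem_setOf_eq, Metric.mem_closedBall,
        dist_eq_norm, sub_neg_eq_add]
      rw [add_comm]
    have hms : MeasurableSet (Prod.mk y ⁻¹' S) := by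
      rw [hpre]
      exact hA_cont.measurable measurableSet_closedBall
    have hlindet : LinearMap.det (Matrix.toEuclideanLin M₀) = M₀.det :=
      det_toEuclideanLin' d M₀
    have hvol : volume (Prod.mk y ⁻¹' S) =
        ENNReal.ofReal |(M₀.det)⁻¹| * (ENNReal.ofReal (ρ ^ d) * κ) := by
      rw [hpre]
      have := MeasureTheory.Measure.addHaar_preimage_linearMap (volume : Measure (Rd d))
        (f := Matrix.toEuclideanLin M₀) (by rw [hlindet]; exact hM₀det)
        (Metric.closedBall (-y) ρ)
      rw [this, hlindet]
      congr 1
      rw [MeasureTheory.Measure.addHaar_closedBall (volume : Measure (Rd d)) (-y) hρ.le]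
      rw [hκ]
      congr 2
      rw [finrank_euclideanSpace_fin]
    calc P (Prod.mk y ⁻¹' S) = ∫⁻ x in Prod.mk y ⁻¹' S, f x ∂volume := by
          rw [hPf, withDensity_apply _ hms]
      _ ≤ ∫⁻ _ in Prod.mk y ⁻¹' S, (C : ℝ≥0∞) ∂volume := lintegral_mono fun x => hfC x
      _ = (C : ℝ≥0∞) * volume (Prod.mk y ⁻¹' S) := setLIntegral_const _ _
      _ = (C : ℝ≥0∞) * (ENNReal.ofReal |(M₀.det)⁻¹| * (ENNReal.ofReal (ρ ^ d) * κ)) := by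
          rw [hvol]
  calc Pr {θ | ‖PiRandom n T W θ u - PiRandom n T W θ v‖ ≤ ρ}
      ≤ Pr ({θ | ‖F θ + Matrix.toEuclideanLin M₀ (Y θ)‖ ≤ ρ} ∪ Ω0ᶜ) := measure_mono hsub
    _ ≤ Pr {θ | ‖F θ + Matrix.toEuclideanLin M₀ (Y θ)‖ ≤ ρ} + Pr Ω0ᶜ := measure_union_le _ _
    _ = Pr ((fun θ => (F θ, Y θ)) ⁻¹' S) := by rw [hΩ0c, add_zero]; rfl
    _ = (Pr.map (fun θ => (F θ, Y θ))) S :=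
        (Measure.map_apply (hFmeas.prodMk hYmeas) hS).symm
    _ = ((Pr.map F).prod P) S := by
        rw [(ProbabilityTheory.indepFun_iff_map_prod_eq_prod_map_map hFmeas.aemeasurable
          hYmeas.aemeasurable).1 hIndep, hWmap]
    _ = ∫⁻ y, P (Prod.mk y ⁻¹' S) ∂(Pr.map F) := Measure.prod_apply hS
    _ ≤ ∫⁻ _, (C : ℝ≥0∞) * (ENNReal.ofReal |(M₀.det)⁻¹| * (ENNReal.ofReal (ρ ^ d) * κ))
          ∂(Pr.map F) := lintegral_mono hslice
    _ = (C : ℝ≥0∞) * (ENNReal.ofReal |(M₀.det)⁻¹| * (ENNReal.ofReal (ρ ^ d) * κ)) := by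
        rw [lintegral_const, measure_univ, mul_one]
    _ ≤ ENNReal.ofReal (((C : ℝ) + 1) * (κ.toReal + 1) * ρ ^ d /
          phi d (Tword n T (wTake n u (meetLen n u v))) d) := by
        rw [← hk, ← hM₀, phi_d_eq_abs_det hd M₀]
        have hκeq : κ = ENNReal.ofReal κ.toReal := (ENNReal.ofReal_toReal hκne).symm
        conv_lhs => rw [hκeq]
        rw [← ENNReal.ofReal_coe_nnreal]
        rw [← ENNReal.ofReal_mul (by positivity), ← ENNReal.ofReal_mul (abs_nonneg _),
          ← ENNReal.ofReal_mul (NNReal.coe_nonneg C)]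
        apply ENNReal.ofReal_le_ofReal
        rw [abs_inv]
        rw [div_eq_mul_inv]
        have h1 : (C : ℝ) * (|M₀.det|⁻¹ * (ρ ^ d * κ.toReal)) =
            ((C : ℝ) * κ.toReal) * (ρ ^ d * |M₀.det|⁻¹) := by ring
        have h2 : ((C : ℝ) + 1) * (κ.toReal + 1) * ρ ^ d * |M₀.det|⁻¹ =
            (((C : ℝ) + 1) * (κ.toReal + 1)) * (ρ ^ d * |M₀.det|⁻¹) := by ring
        rw [h1, h2]
        apply mul_le_mul_of_nonneg_right _ (by positivity)
        have hC0 : (0 : ℝ) ≤ C := NNReal.coe_nonneg C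
        have hκ0 : (0 : ℝ) ≤ κ.toReal := ENNReal.toReal_nonneg
        nlinarith


end MoranPaper
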